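/- arXiv:2001.10652 — 2 statements merged into one kernel-verified Lean document; each statement's English description precedes it below -/
import Mathlib

section
/- Let v : Y → ℝ assign a real value to each outcome, and fix two treatment values t₁, t₀ ∈ T. Assume overlap for both: for every c ∈ C, Σ_{a} pA(a)·kT(a,c,t₁) > 0 and Σ_{a} pA(a)·kT(a,c,t₀) > 0. Then the average treatment effect is identified by adjusting for the confounding factors alone: Σ_{y} v(y)·P(y | do(t₁)) − Σ_{y} v(y)·P(y | do(t₀)) = Σ_{c ∈ C} pC(c)·( E[v | T=t₁, Z_c=c] − E[v | T=t₀, Z_c=c] ), where E[v | T=t, Z_c=c] := (Σ_{a,r,y} v(y)·pA(a)·pR(r)·kT(a,c,t)·kY(t,c,r,y)) / (Σ_{a} pA(a)·kT(a,c,t)). -/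
/-- Identification of the average treatment effect by adjusting for the
confounding factors alone (Theorem 1 of TEDVAE, in expectation form). -/
theorem tedvae_ate_identified
    (A C R T Y : Type) [Fintype A] [Fintype C] [Fintype R] [Fintype T] [Fintype Y]
    [Nonempty A] [Nonempty C] [Nonempty R] [Nonempty T] [Nonempty Y]
    (pA : A → ℝ) (pC : C → ℝ) (pR : R → ℝ)
    (kT : A → C → T → ℝ) (kY : T → C → R → Y → ℝ)
    (hpA : ∀ a, 0 ≤ pA a) (hpAsum : ∑ a, pA a = 1)
    (hpC : ∀ c, 0 ≤ pC c) (hpCsum : ∑ c, pC c = 1)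
    (hpR : ∀ r, 0 ≤ pR r) (hpRsum : ∑ r, pR r = 1)
    (hkT : ∀ a c t, 0 ≤ kT a c t) (hkTsum : ∀ a c, ∑ t, kT a c t = 1)
    (hkY : ∀ t c r y, 0 ≤ kY t c r y) (hkYsum : ∀ t c r, ∑ y, kY t c r y = 1)
    (P : A → C → R → T → Y → ℝ)
    (hP : ∀ a c r t y, P a c r t y = pA a * pC c * pR r * kT a c t * kY t c r y)
    (v : Y → ℝ) (t₁ t₀ : T)
    (hoverlap₁ : ∀ c, 0 < ∑ a, pA a * kT a c t₁)
    (hoverlap₀ : ∀ c, 0 < ∑ a, pA a * kT a c t₀) :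
    (∑ y, v y * ∑ a, ∑ c, ∑ r, pA a * pC c * pR r * kY t₁ c r y) -
      (∑ y, v y * ∑ a, ∑ c, ∑ r, pA a * pC c * pR r * kY t₀ c r y) =
    ∑ c, pC c *
      ((∑ a, ∑ r, ∑ y, v y * pA a * pR r * kT a c t₁ * kY t₁ c r y) /
          (∑ a, pA a * kT a c t₁) -
        (∑ a, ∑ r, ∑ y, v y * pA a * pR r * kT a c t₀ * kY t₀ c r y) /
          (∑ a, pA a * kT a c t₀)) := by
  have key : ∀ t : T, (∀ c, 0 < ∑ a, pA a * kT a c t) →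
      (∑ y, v y * ∑ a, ∑ c, ∑ r, pA a * pC c * pR r * kY t c r y)
      = ∑ c, pC c * ((∑ a, ∑ r, ∑ y, v y * pA a * pR r * kT a c t * kY t c r y) /
          (∑ a, pA a * kT a c t)) := by
    intro t hov
    have hratio : ∀ c, (∑ a, ∑ r, ∑ y, v y * pA a * pR r * kT a c t * kY t c r y) /
        (∑ a, pA a * kT a c t) = ∑ r, ∑ y, v y * pR r * kY t c r y := by
      intro c
      have hnum : (∑ a, ∑ r, ∑ y, v y * pA a * pR r * kT a c t * kY t c r y)
          = (∑ a, pA a * kT a c t) * (∑ r, ∑ y, v y * pR r * kY t c r y) := by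
        rw [Finset.sum_mul]
        refine Finset.sum_congr rfl fun a _ => ?_
        rw [Finset.mul_sum]
        refine Finset.sum_congr rfl fun r _ => ?_
        rw [Finset.mul_sum]
        exact Finset.sum_congr rfl fun y _ => by ring
      rw [hnum, mul_comm, mul_div_assoc, div_self (ne_of_gt (hov c)), mul_one]
    have h1 : ∀ y, (∑ a, ∑ c, ∑ r, pA a * pC c * pR r * kY t c r y)
        = ∑ c, ∑ r, pC c * pR r * kY t c r y := by
      intro y
      calc (∑ a, ∑ c, ∑ r, pA a * pC c * pR r * kY t c r y)
          = ∑ a, pA a * ∑ c, ∑ r, pC c * pR r * kY t c r y := by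
            refine Finset.sum_congr rfl fun a _ => ?_
            rw [Finset.mul_sum]
            refine Finset.sum_congr rfl fun c _ => ?_
            rw [Finset.mul_sum]
            exact Finset.sum_congr rfl fun r _ => by ring
        _ = ∑ c, ∑ r, pC c * pR r * kY t c r y := by
            rw [← Finset.sum_mul, hpAsum, one_mul]
    simp only [hratio, h1, Finset.mul_sum]
    rw [Finset.sum_comm]
    refine Finset.sum_congr rfl fun c _ => ?_
    rw [Finset.sum_comm]
    exact Finset.sum_congr rfl fun r _ => Finset.sum_congr rfl fun y _ => by ring
  rw [key t₁ hoverlap₁, key t₀ hoverlap₀, ← Finset.sum_sub_distrib]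
  exact Finset.sum_congr rfl fun c _ => by ring
end

section
/- Let v : Y → ℝ assign a real value to each outcome, fix two treatment values t₁, t₀ ∈ T and latent values c ∈ C, r ∈ R, and assume pC(c) > 0, pR(r) > 0, Σ_{a} pA(a)·kT(a,c,t₁) > 0, and Σ_{a} pA(a)·kT(a,c,t₀) > 0. Then the conditional average treatment effect given the confounding and risk factors is identified from the observational distribution: E[v | T=t₁, Z_c=c, Z_y=r] − E[v | T=t₀, Z_c=c, Z_y=r] = Σ_{y ∈ Y} v(y)·( kY(t₁,c,r,y) − kY(t₀,c,r,y) ), where E[v | T=t, Z_c=c, Z_y=r] := (Σ_{a,y} v(y)·pA(a)·kT(a,c,t)·kY(t,c,r,y)) / (Σ_{a} pA(a)·kT(a,c,t)), and the right-hand side is the interventional contrast E[v | do(t₁), z_c=c, z_y=r] − E[v | do(t₀), z_c=c, z_y=r]. -/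
/-- Identification of the conditional average treatment effect given the
confounding and risk factors (Theorem 2 of TEDVAE, in expectation form). -/
theorem tedvae_cate_contrast_identified
    (A C R T Y : Type) [Fintype A] [Fintype C] [Fintype R] [Fintype T] [Fintype Y]
    [Nonempty A] [Nonempty C] [Nonempty R] [Nonempty T] [Nonempty Y]
    (pA : A → ℝ) (pC : C → ℝ) (pR : R → ℝ)
    (kT : A → C → T → ℝ) (kY : T → C → R → Y → ℝ)
    (hpA : ∀ a, 0 ≤ pA a) (hpAsum : ∑ a, pA a = 1)
    (hpC : ∀ c, 0 ≤ pC c) (hpCsum : ∑ c, pC c = 1)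
    (hpR : ∀ r, 0 ≤ pR r) (hpRsum : ∑ r, pR r = 1)
    (hkT : ∀ a c t, 0 ≤ kT a c t) (hkTsum : ∀ a c, ∑ t, kT a c t = 1)
    (hkY : ∀ t c r y, 0 ≤ kY t c r y) (hkYsum : ∀ t c r, ∑ y, kY t c r y = 1)
    (P : A → C → R → T → Y → ℝ)
    (hP : ∀ a c r t y, P a c r t y = pA a * pC c * pR r * kT a c t * kY t c r y)
    (v : Y → ℝ) (t₁ t₀ : T) (c : C) (r : R)
    (hc : 0 < pC c) (hr : 0 < pR r)
    (hoverlap₁ : 0 < ∑ a, pA a * kT a c t₁)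
    (hoverlap₀ : 0 < ∑ a, pA a * kT a c t₀) :
    (∑ a, ∑ y, v y * pA a * kT a c t₁ * kY t₁ c r y) /
        (∑ a, pA a * kT a c t₁) -
      (∑ a, ∑ y, v y * pA a * kT a c t₀ * kY t₀ c r y) /
        (∑ a, pA a * kT a c t₀) =
    ∑ y, v y * (kY t₁ c r y - kY t₀ c r y) := by
  have key : ∀ t : T, (∑ a, ∑ y, v y * pA a * kT a c t * kY t c r y) =
      (∑ a, pA a * kT a c t) * (∑ y, v y * kY t c r y) := by
    intro t
    rw [Finset.sum_mul_sum]
    exact Finset.sum_congr rfl fun a _ => Finset.sum_congr rfl fun y _ => by ring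
  rw [key t₁, key t₀, mul_div_cancel_left₀ _ hoverlap₁.ne',
    mul_div_cancel_left₀ _ hoverlap₀.ne', ← Finset.sum_sub_distrib]
  exact Finset.sum_congr rfl fun y _ => by ring
end
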